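/- Let V and V′ be finite-dimensional complex graded vector spaces with involutions ρ, ρ′ as above, both of odd dimension, with all graded pieces of dimension ≤ 1. Let ε and ε′ be the scalars by which ρ and ρ′ act on the respective (one-dimensional) middle graded pieces. Then for the involution ρ ⊗ ρ′ on V ⊗ V′ one has d⁺(V ⊗ V′) − d⁻(V ⊗ V′) = ε · ε′. -/

import Mathlib

open Module LinearMap TensorProduct


theorem trace_involution {W : Type*} [AddCommGroup W] [Module ℂ W] [FiniteDimensional ℂ W]
    (σ : W →ₗ[ℂ] W) (hσ : σ ∘ₗ σ = LinearMap.id) :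
    trace ℂ W σ =
      (finrank ℂ (ker (σ - LinearMap.id)) : ℂ) - (finrank ℂ (ker (σ + LinearMap.id)) : ℂ) := by
  set π : W →ₗ[ℂ] W := (2⁻¹ : ℂ) • (LinearMap.id + σ) with hπ
  have hσσ : ∀ x, σ (σ x) = x := fun x => congrArg (· x) hσ
  have hproj : IsProj (ker (σ - LinearMap.id)) π := by
    constructor
    · intro x
      simp only [mem_ker, hπ, LinearMap.smul_apply, LinearMap.add_apply, id_apply, LinearMap.sub_apply, map_smul, map_add,
        hσσ]
      have h0 : σ x - x + (x - σ x) = 0 := by abel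
      rw [h0, smul_zero]
    · intro x hx
      have hx' : σ x = x := by
        have := (mem_ker.mp hx)
        simpa [sub_eq_zero] using this
      simp only [hπ, LinearMap.smul_apply, LinearMap.add_apply, id_apply, hx']
      rw [← two_smul ℂ x, smul_smul]
      norm_num
  have hkerπ : ker π = ker (σ + LinearMap.id) := by
    ext x
    simp only [mem_ker, hπ, LinearMap.smul_apply, LinearMap.add_apply, id_apply, smul_eq_zero]
    constructor
    · rintro (h | h)
      · norm_num at h
      · rw [add_comm]; exact h
    · intro h; right; rw [add_comm] at h; exact h
  have htr : trace ℂ W π = (finrank ℂ (ker (σ - LinearMap.id)) : ℂ) := hproj.trace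
  have hrank : finrank ℂ (ker (σ - LinearMap.id)) + finrank ℂ (ker (σ + LinearMap.id)) =
      finrank ℂ W := by
    rw [← hkerπ]
    have := LinearMap.finrank_range_add_finrank_ker π
    have hr : range π = ker (σ - LinearMap.id) :=
      le_antisymm (range_le_iff_comap.mpr (eq_top_iff.mpr fun x _ => hproj.map_mem x))
        (fun x hx => ⟨x, hproj.map_id x hx⟩)
    rw [hr] at this
    omega
  have hσπ : σ = (2 : ℂ) • π - LinearMap.id := by
    rw [hπ, smul_smul]; norm_num
  have ht2 : trace ℂ W σ = 2 * (finrank ℂ (ker (σ - LinearMap.id)) : ℂ) - (finrank ℂ W : ℂ) := by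
    conv_lhs => rw [hσπ]
    rw [map_sub, map_smul, htr, trace_id, smul_eq_mul]
  rw [ht2]
  have hc : (finrank ℂ (ker (σ - LinearMap.id)) : ℂ) + (finrank ℂ (ker (σ + LinearMap.id)) : ℂ)
      = (finrank ℂ W : ℂ) := by exact_mod_cast hrank
  linear_combination hc


theorem trace_graded_involution {V : Type*} [AddCommGroup V] [Module ℂ V] [FiniteDimensional ℂ V]
    (Vp : ℤ → Submodule ℂ V) (hV : DirectSum.IsInternal Vp)
    (ρ : V →ₗ[ℂ] V) (w : ℤ) (hmap : ∀ p, (Vp p).map ρ = Vp (w - p))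
    (hw : Even w) (hm : finrank ℂ (Vp (w / 2)) = 1)
    (ε : ℤ) (hmid : ∀ v ∈ Vp (w / 2), ρ v = (ε : ℂ) • v) :
    trace ℂ V ρ = (ε : ℂ) := by
  set m := w / 2 with hmdef
  have hwm : w = 2 * m := by obtain ⟨k, hk⟩ := hw; omega
  set e := LinearEquiv.ofBijective (DirectSum.coeLinearMap Vp) hV with he
  set π : V →ₗ[ℂ] V :=
    (Vp m).subtype ∘ₗ (DirectSum.component ℂ ℤ (fun p => Vp p) m) ∘ₗ e.symm.toLinearMap with hπ
  have hπ_apply : ∀ x, π x = ((e.symm x) m : V) := fun x => rfl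
  have hπ_mem : ∀ x, π x ∈ Vp m := fun x => ((e.symm x) m).2
  have hπ_same : ∀ x ∈ Vp m, π x = x := by
    intro x hx
    rw [hπ_apply, hV.ofBijective_coeLinearMap_of_mem hx]
  have hπ_ne : ∀ p, p ≠ m → ∀ x ∈ Vp p, π x = 0 := by
    intro p hp x hx
    rw [hπ_apply, hV.ofBijective_coeLinearMap_of_mem_ne hp hx]
    rfl
  have hproj : IsProj (Vp m) π := ⟨hπ_mem, hπ_same⟩
  -- ρ ∘ π = ε • π
  have hρπ : ρ ∘ₗ π = (ε : ℂ) • π := by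
    ext x
    exact hmid _ (hπ_mem x)
  have htrπ : trace ℂ V (ρ ∘ₗ π) = (ε : ℂ) := by
    rw [hρπ, map_smul, hproj.trace, hm, smul_eq_mul]
    norm_num
  -- trace of off-diagonal part is zero
  have hzero : trace ℂ V (ρ - ρ ∘ₗ π) = 0 := by
    apply LinearMap.trace_eq_zero_of_mapsTo_ne hV (fun p => if p = m then m + 1 else w - p)
    · intro p
      by_cases hp : p = m <;> simp [hp] <;> omega
    · intro p x hx
      simp only [LinearMap.sub_apply, comp_apply]
      by_cases hp : p = m
      · subst hp
        rw [hπ_same x hx, sub_self]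
        simp
      · rw [hπ_ne p hp x hx, map_zero, sub_zero]
        simp only [if_neg hp]
        exact (hmap p) ▸ Submodule.mem_map_of_mem hx
  have := htrπ
  calc trace ℂ V ρ = trace ℂ V (ρ - ρ ∘ₗ π) + trace ℂ V (ρ ∘ₗ π) := by
        rw [← map_add]; congr 1; abel
    _ = (ε : ℂ) := by rw [hzero, htrπ, zero_add]

/-- V and V′ of odd dimension, ℤ-graded with all graded pieces of dimension ≤ 1,
involutions ρ, ρ′ with ρ(V_p) = V_{w−p}, ρ′(V′_q) = V′_{w′−q}, acting by signs
ε, ε′ on the one-dimensional middle pieces. Then for ρ ⊗ ρ′ on V ⊗ V′,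
d⁺(V ⊗ V′) − d⁻(V ⊗ V′) = ε · ε′. -/
theorem tensor_odd_odd_signature
    (V V' : Type*) [AddCommGroup V] [Module ℂ V] [FiniteDimensional ℂ V]
    [AddCommGroup V'] [Module ℂ V'] [FiniteDimensional ℂ V']
    (Vp : ℤ → Submodule ℂ V) (hV : DirectSum.IsInternal Vp)
    (hVsmall : ∀ p, finrank ℂ (Vp p) ≤ 1)
    (V'q : ℤ → Submodule ℂ V') (hV' : DirectSum.IsInternal V'q)
    (hV'small : ∀ q, finrank ℂ (V'q q) ≤ 1)
    (ρ : V →ₗ[ℂ] V) (hρ : ρ ∘ₗ ρ = LinearMap.id)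
    (ρ' : V' →ₗ[ℂ] V') (hρ' : ρ' ∘ₗ ρ' = LinearMap.id)
    (w w' : ℤ) (hmap : ∀ p, (Vp p).map ρ = Vp (w - p))
    (hmap' : ∀ q, (V'q q).map ρ' = V'q (w' - q))
    (hodd : Odd (finrank ℂ V)) (hodd' : Odd (finrank ℂ V'))
    (hw : Even w) (hw' : Even w')
    (hm : finrank ℂ (Vp (w / 2)) = 1) (hm' : finrank ℂ (V'q (w' / 2)) = 1)
    (ε ε' : ℤ) (hε : ε = 1 ∨ ε = -1) (hε' : ε' = 1 ∨ ε' = -1)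
    (hmid : ∀ v ∈ Vp (w / 2), ρ v = (ε : ℂ) • v)
    (hmid' : ∀ v ∈ V'q (w' / 2), ρ' v = (ε' : ℂ) • v) :
    (finrank ℂ (LinearMap.ker (TensorProduct.map ρ ρ' - LinearMap.id)) : ℤ) -
      (finrank ℂ (LinearMap.ker (TensorProduct.map ρ ρ' + LinearMap.id)) : ℤ) =
    ε * ε' := by
  have hT : (TensorProduct.map ρ ρ') ∘ₗ (TensorProduct.map ρ ρ') = LinearMap.id := by
    rw [← TensorProduct.map_comp, hρ, hρ', TensorProduct.map_id]
  have h1 := trace_involution (TensorProduct.map ρ ρ') hT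
  have h2 : trace ℂ (V ⊗[ℂ] V') (TensorProduct.map ρ ρ') = trace ℂ V ρ * trace ℂ V' ρ' :=
    trace_tensorProduct' ρ ρ'
  have h3 : trace ℂ V ρ = (ε : ℂ) :=
    trace_graded_involution Vp hV ρ w hmap hw hm ε hmid
  have h4 : trace ℂ V' ρ' = (ε' : ℂ) :=
    trace_graded_involution V'q hV' ρ' w' hmap' hw' hm' ε' hmid'
  rw [h2, h3, h4] at h1
  have h5 : ((ε * ε' : ℤ) : ℂ) =
      ((finrank ℂ (LinearMap.ker (TensorProduct.map ρ ρ' - LinearMap.id)) : ℤ) -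
        (finrank ℂ (LinearMap.ker (TensorProduct.map ρ ρ' + LinearMap.id)) : ℤ) : ℂ) := by
    push_cast
    rw [← h1]
  exact_mod_cast h5.symm
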